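/- Let D, Z be {0,1}-valued random variables, X a random vector, and suppose: (i) potential treatments D(0), D(1) satisfy D = Z·D(1) + (1−Z)·D(0); (ii) (D(0), D(1)) ⫫ Z | X; (iii) ℙ(D(1) ≥ D(0) | X) = 1 a.s.; and (iv) the instrument propensity score q(X) = ℙ(Z=1|X) satisfies ε ≤ q(X) ≤ 1−ε a.s. Then E[1 − (1−D)Z/q(X) − D(1−Z)/(1−q(X))] = ℙ(D(1) > D(0)), i.e., the κ normalization equals the probability of being a complier. -/

import Mathlib

open MeasureTheory ProbabilityTheory

lemma abadie_aux {Ω : Type*} {m0 : MeasurableSpace Ω} (μ : Measure Ω) [IsProbabilityMeasure μ]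
    {m : MeasurableSpace Ω} (hm : m ≤ m0) (p h r : Ω → ℝ) (ε : ℝ) (hε : 0 < ε)
    (hp_meas : StronglyMeasurable[m] p) (hpb : ∀ᵐ ω ∂μ, ε ≤ p ω)
    (hh : Integrable h μ)
    (hfac : μ[h|m] =ᵐ[μ] fun ω => (μ[r|m]) ω * p ω) :
    ∫ ω, h ω / p ω ∂μ = ∫ ω, r ω ∂μ := by
  have hpinv_meas : StronglyMeasurable[m] (fun ω => (p ω)⁻¹) := by measurability
  have hpinv_bd : ∀ᵐ ω ∂μ, ‖(p ω)⁻¹‖ ≤ ε⁻¹ := by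
    filter_upwards [hpb] with ω hω
    have h0 : 0 < p ω := hε.trans_le hω
    rw [Real.norm_eq_abs, abs_of_pos (inv_pos.2 h0)]
    exact inv_anti₀ hε hω
  have hpull : μ[(fun ω => (p ω)⁻¹) * h|m] =ᵐ[μ] (fun ω => (p ω)⁻¹) * μ[h|m] :=
    condExp_stronglyMeasurable_mul_of_bound hm hpinv_meas hh ε⁻¹ hpinv_bd
  have heq : μ[(fun ω => (p ω)⁻¹) * h|m] =ᵐ[μ] μ[r|m] := by
    refine hpull.trans ?_
    filter_upwards [hfac, hpb] with ω h1 h2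
    have h0 : p ω ≠ 0 := (hε.trans_le h2).ne'
    simp only [Pi.mul_apply, h1]
    field_simp
  calc ∫ ω, h ω / p ω ∂μ = ∫ ω, ((fun ω => (p ω)⁻¹) * h) ω ∂μ := by
        congr 1; ext ω; simp [div_eq_inv_mul]
    _ = ∫ ω, (μ[(fun ω => (p ω)⁻¹) * h|m]) ω ∂μ := (integral_condExp hm).symm
    _ = ∫ ω, (μ[r|m]) ω ∂μ := integral_congr_ae heq
    _ = ∫ ω, r ω ∂μ := integral_condExp hm

/-- Abadie's κ normalization: under the local treatment effect assumptions,
`E[1 − (1−D)Z/q(X) − D(1−Z)/(1−q(X))] = ℙ(D(1) > D(0))`, the probability of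
being a complier. -/
theorem statement9 {Ω : Type*} [MeasurableSpace Ω] [StandardBorelSpace Ω]
    (μ : Measure Ω) [IsProbabilityMeasure μ]
    {k : ℕ} (Z D0 D1 D : Ω → ℝ) (X : Ω → Fin k → ℝ) (q : (Fin k → ℝ) → ℝ) (ε : ℝ)
    (hZ : Measurable Z) (hD0 : Measurable D0) (hD1 : Measurable D1) (hX : Measurable X)
    (hq : Measurable q)
    (hZval : ∀ ω, Z ω = 0 ∨ Z ω = 1) (hD0val : ∀ ω, D0 ω = 0 ∨ D0 ω = 1)
    (hD1val : ∀ ω, D1 ω = 0 ∨ D1 ω = 1)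
    (hD : ∀ ω, D ω = Z ω * D1 ω + (1 - Z ω) * D0 ω)
    (hci : CondIndepFun (MeasurableSpace.comap X inferInstance) hX.comap_le
      (fun ω => (D0 ω, D1 ω)) Z μ)
    (hmono : ∀ᵐ ω ∂μ, D0 ω ≤ D1 ω)
    (hε : 0 < ε) (hqb : ∀ᵐ ω ∂μ, ε ≤ q (X ω) ∧ q (X ω) ≤ 1 - ε)
    (hqcond : μ[Z | MeasurableSpace.comap X inferInstance] =ᵐ[μ] fun ω => q (X ω)) :
    ∫ ω, (1 - (1 - D ω) * Z ω / q (X ω) - D ω * (1 - Z ω) / (1 - q (X ω))) ∂μ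
      = (μ {ω | D0 ω < D1 ω}).toReal := by
  have hm : MeasurableSpace.comap X inferInstance ≤ ‹MeasurableSpace Ω› := hX.comap_le
  set P : Ω → ℝ × ℝ := fun ω => (D0 ω, D1 ω) with hP_def
  have hP : Measurable P := hD0.prodMk hD1
  -- bounded integrability helper
  have bdd : ∀ (f : Ω → ℝ), Measurable f → (∀ ω, |f ω| ≤ 1) → Integrable f μ := by
    intro f hf hb
    exact (integrable_const (1:ℝ)).mono' hf.aestronglyMeasurable
      (Filter.Eventually.of_forall fun ω => by simpa [Real.norm_eq_abs] using hb ω)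
  have hZint : Integrable Z μ := bdd Z hZ fun ω => by rcases hZval ω with h|h <;> simp [h]
  have hD0int : Integrable D0 μ := bdd D0 hD0 fun ω => by rcases hD0val ω with h|h <;> simp [h]
  have hD1int : Integrable D1 μ := bdd D1 hD1 fun ω => by rcases hD1val ω with h|h <;> simp [h]
  have hr1int : Integrable (fun ω => 1 - D1 ω) μ := (integrable_const 1).sub hD1int
  have hh1int : Integrable (fun ω => Z ω * (1 - D1 ω)) μ := by
    refine bdd _ (hZ.mul (measurable_const.sub hD1)) fun ω => ?_
    rcases hZval ω with h|h <;> rcases hD1val ω with h1|h1 <;> simp [h, h1]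
  have hh2int : Integrable (fun ω => (1 - Z ω) * D0 ω) μ := by
    refine bdd _ ((measurable_const.sub hZ).mul hD0) fun ω => ?_
    rcases hZval ω with h|h <;> rcases hD0val ω with h1|h1 <;> simp [h, h1]
  -- strong measurability of q ∘ X w.r.t. m
  have hqX_m : Measurable[(MeasurableSpace.comap X inferInstance)] (fun ω => q (X ω)) := fun s hs => ⟨q ⁻¹' s, hq hs, rfl⟩
  have hqX_sm : StronglyMeasurable[(MeasurableSpace.comap X inferInstance)] (fun ω => q (X ω)) := hqX_m.stronglyMeasurable
  have hqX1_sm : StronglyMeasurable[(MeasurableSpace.comap X inferInstance)] (fun ω => 1 - q (X ω)) :=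
    (stronglyMeasurable_const.sub hqX_sm)
  -- conditional independence factorization
  have factor := (condIndepFun_iff_condExp_inter_preimage_eq_mul
    (m' := MeasurableSpace.comap X inferInstance) (hm' := hX.comap_le) (μ := μ)
    (f := P) (g := Z) hP hZ).mp hci
  -- term 1
  have hs₁ : MeasurableSet ((Set.univ : Set ℝ) ×ˢ ({0} : Set ℝ)) :=
    MeasurableSet.univ.prod (measurableSet_singleton 0)
  have ht₁ : MeasurableSet ({1} : Set ℝ) := measurableSet_singleton 1
  have fac1 := factor _ _ hs₁ ht₁
  have hind1 : (fun ω => Z ω * (1 - D1 ω)) =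
      Set.indicator (P ⁻¹' ((Set.univ : Set ℝ) ×ˢ ({0} : Set ℝ)) ∩ Z ⁻¹' {1}) (fun _ => (1:ℝ)) := by
    funext ω
    rcases hZval ω with h|h <;> rcases hD1val ω with h1|h1 <;>
      simp [Set.indicator_apply, hP_def, h, h1]
  have hindB : (fun ω => 1 - D1 ω) =
      Set.indicator (P ⁻¹' ((Set.univ : Set ℝ) ×ˢ ({0} : Set ℝ))) (fun _ => (1:ℝ)) := by
    funext ω
    rcases hD1val ω with h1|h1 <;> simp [Set.indicator_apply, hP_def, h1]
  have hindA : Z = Set.indicator (Z ⁻¹' ({1} : Set ℝ)) (fun _ => (1:ℝ)) := by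
    funext ω
    rcases hZval ω with h|h <;> simp [Set.indicator_apply, h]
  have eA : (μ⟦Z ⁻¹' ({1} : Set ℝ)|(MeasurableSpace.comap X inferInstance)⟧) =ᵐ[μ] fun ω => q (X ω) := by
    rw [← hindA]; exact hqcond
  have e1 : μ[(fun ω => Z ω * (1 - D1 ω))|(MeasurableSpace.comap X inferInstance)]
      =ᵐ[μ] fun ω => (μ[(fun ω => 1 - D1 ω)|(MeasurableSpace.comap X inferInstance)]) ω * q (X ω) := by
    rw [hind1, hindB]
    refine fac1.trans ?_
    filter_upwards [eA] with ω hω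
    rw [hω]
  have T1 : ∫ ω, (Z ω * (1 - D1 ω)) / q (X ω) ∂μ = ∫ ω, (1 - D1 ω) ∂μ :=
    abadie_aux μ hm _ _ _ ε hε hqX_sm (hqb.mono fun ω h => h.1) hh1int e1
  -- term 2
  have hs₂ : MeasurableSet (({1} : Set ℝ) ×ˢ (Set.univ : Set ℝ)) :=
    (measurableSet_singleton 1).prod MeasurableSet.univ
  have ht₂ : MeasurableSet (({1} : Set ℝ)ᶜ) := (measurableSet_singleton 1).compl
  have fac2 := factor _ _ hs₂ ht₂
  have hind2 : (fun ω => (1 - Z ω) * D0 ω) =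
      Set.indicator (P ⁻¹' (({1} : Set ℝ) ×ˢ (Set.univ : Set ℝ)) ∩ Z ⁻¹' ({1} : Set ℝ)ᶜ)
        (fun _ => (1:ℝ)) := by
    funext ω
    rcases hZval ω with h|h <;> rcases hD0val ω with h1|h1 <;>
      simp [Set.indicator_apply, hP_def, h, h1]
  have hindC : D0 = Set.indicator (P ⁻¹' (({1} : Set ℝ) ×ˢ (Set.univ : Set ℝ))) (fun _ => (1:ℝ)) := by
    funext ω
    rcases hD0val ω with h1|h1 <;> simp [Set.indicator_apply, hP_def, h1]
  have hindA2 : (fun ω => 1 - Z ω) =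
      Set.indicator (Z ⁻¹' (({1} : Set ℝ)ᶜ)) (fun _ => (1:ℝ)) := by
    funext ω
    rcases hZval ω with h|h <;> simp [Set.indicator_apply, h]
  have eA2 : (μ⟦Z ⁻¹' (({1} : Set ℝ)ᶜ)|(MeasurableSpace.comap X inferInstance)⟧) =ᵐ[μ] fun ω => 1 - q (X ω) := by
    rw [← hindA2]
    have hsub : μ[(fun ω => 1 - Z ω)|(MeasurableSpace.comap X inferInstance)] =ᵐ[μ] μ[(fun _ => (1:ℝ))|(MeasurableSpace.comap X inferInstance)] - μ[Z|(MeasurableSpace.comap X inferInstance)] :=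
      condExp_sub (integrable_const 1) hZint _
    refine hsub.trans ?_
    have hc : μ[(fun _ => (1:ℝ))|(MeasurableSpace.comap X inferInstance)] = fun _ => (1:ℝ) := condExp_const hm 1
    filter_upwards [hqcond] with ω hω
    simp [hc, hω]
  have e2 : μ[(fun ω => (1 - Z ω) * D0 ω)|(MeasurableSpace.comap X inferInstance)]
      =ᵐ[μ] fun ω => (μ[D0|(MeasurableSpace.comap X inferInstance)]) ω * (1 - q (X ω)) := by
    rw [hind2, hindC]
    refine fac2.trans ?_
    filter_upwards [eA2] with ω hω
    rw [hω]
  have T2 : ∫ ω, ((1 - Z ω) * D0 ω) / (1 - q (X ω)) ∂μ = ∫ ω, D0 ω ∂μ :=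
    abadie_aux μ hm _ _ _ ε hε hqX1_sm
      (hqb.mono fun ω h => by linarith [h.2]) hh2int e2
  -- rewrite integrand
  have hfun : ∀ ω, 1 - (1 - D ω) * Z ω / q (X ω) - D ω * (1 - Z ω) / (1 - q (X ω))
      = 1 - (Z ω * (1 - D1 ω)) / q (X ω) - ((1 - Z ω) * D0 ω) / (1 - q (X ω)) := by
    intro ω
    rcases hZval ω with h|h <;> rw [hD ω, h] <;> ring
  -- integrability of the quotient terms
  have hqinv_bd : ∀ᵐ ω ∂μ, ‖(q (X ω))⁻¹‖ ≤ ε⁻¹ := by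
    filter_upwards [hqb] with ω hω
    have h0 : 0 < q (X ω) := hε.trans_le hω.1
    rw [Real.norm_eq_abs, abs_of_pos (inv_pos.2 h0)]
    exact inv_anti₀ hε hω.1
  have hq1inv_bd : ∀ᵐ ω ∂μ, ‖(1 - q (X ω))⁻¹‖ ≤ ε⁻¹ := by
    filter_upwards [hqb] with ω hω
    have h0 : (0:ℝ) < 1 - q (X ω) := by linarith [hω.2]
    rw [Real.norm_eq_abs, abs_of_pos (inv_pos.2 h0)]
    exact inv_anti₀ hε (by linarith [hω.2])
  have I1 : Integrable (fun ω => (Z ω * (1 - D1 ω)) / q (X ω)) μ := by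
    have := hh1int.bdd_mul ((hq.comp hX).inv).aestronglyMeasurable hqinv_bd
    simpa [div_eq_inv_mul] using this
  have I2 : Integrable (fun ω => ((1 - Z ω) * D0 ω) / (1 - q (X ω))) μ := by
    have := hh2int.bdd_mul
      ((measurable_const.sub (hq.comp hX)).inv).aestronglyMeasurable hq1inv_bd
    simpa [div_eq_inv_mul] using this
  -- final identity for complier probability
  have hset : MeasurableSet {ω | D0 ω < D1 ω} := measurableSet_lt hD0 hD1
  have hae : (fun ω => D1 ω - D0 ω)
      =ᵐ[μ] Set.indicator {ω | D0 ω < D1 ω} (fun _ => (1:ℝ)) := by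
    filter_upwards [hmono] with ω h
    rcases hD0val ω with h0|h0 <;> rcases hD1val ω with h1|h1 <;>
      simp [Set.indicator_apply, Set.mem_setOf_eq, h0, h1] <;> norm_num <;>
      (exfalso; rw [h0, h1] at h; linarith)
  have hcompl : ∫ ω, (D1 ω - D0 ω) ∂μ = (μ {ω | D0 ω < D1 ω}).toReal := by
    rw [integral_congr_ae hae, integral_indicator_const (1:ℝ) hset]; simp; rfl
  calc ∫ ω, (1 - (1 - D ω) * Z ω / q (X ω) - D ω * (1 - Z ω) / (1 - q (X ω))) ∂μ
      = ∫ ω, (1 - (Z ω * (1 - D1 ω)) / q (X ω) - ((1 - Z ω) * D0 ω) / (1 - q (X ω))) ∂μ := by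
        exact integral_congr_ae (Filter.Eventually.of_forall hfun)
    _ = ∫ ω, (1 - (Z ω * (1 - D1 ω)) / q (X ω)) ∂μ
        - ∫ ω, ((1 - Z ω) * D0 ω) / (1 - q (X ω)) ∂μ :=
        integral_sub ((integrable_const 1).sub I1) I2
    _ = (1 - ∫ ω, (Z ω * (1 - D1 ω)) / q (X ω) ∂μ)
        - ∫ ω, ((1 - Z ω) * D0 ω) / (1 - q (X ω)) ∂μ := by
        rw [integral_sub (integrable_const 1) I1]; simp
    _ = (1 - ∫ ω, (1 - D1 ω) ∂μ) - ∫ ω, D0 ω ∂μ := by rw [T1, T2]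
    _ = ∫ ω, D1 ω ∂μ - ∫ ω, D0 ω ∂μ := by
        rw [integral_sub (integrable_const 1) hD1int]; simp
    _ = ∫ ω, (D1 ω - D0 ω) ∂μ := (integral_sub hD1int hD0int).symm
    _ = (μ {ω | D0 ω < D1 ω}).toReal := hcompl
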